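/- For every integer n ≥ 1, q_1^{(2)}(n) ≥ Q_1^{(2,−)}(n); that is, the number of partitions of n into parts ≥ 2 in which any two parts differ by at least 1 (equivalently, into distinct parts ≥ 2) is at least the number of partitions of n into parts congruent to 2 modulo 4 with no part equal to 2. -/

import Mathlib

/-- q_d^{(a)}(n): the number of partitions of n into parts each ≥ a in which
any two parts differ by at least d. -/
def qPart (d a n : ℕ) : ℕ :=
  Fintype.card {p : Nat.Partition n //
    (∀ i ∈ p.parts, a ≤ i) ∧
    ∀ i ∈ p.parts, p.parts.count i = 1 ∧
      ∀ j ∈ p.parts, j ≠ i → (d : ℤ) ≤ |(i : ℤ) - (j : ℤ)|}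

/-- Q_d^{(a)}(n): the number of partitions of n into parts ≡ a or −a (mod d+3). -/
def QPart (d a n : ℕ) : ℕ :=
  Fintype.card {p : Nat.Partition n //
    ∀ i ∈ p.parts, (i : ZMod (d + 3)) = (a : ZMod (d + 3)) ∨
      (i : ZMod (d + 3)) = -(a : ZMod (d + 3))}

/-- Q_d^{(a,−)}(n): the number of partitions of n into parts ≡ a or −a (mod d+3)
with no part equal to d+3−a. -/
def QPartMinus (d a n : ℕ) : ℕ :=
  Fintype.card {p : Nat.Partition n //
    (∀ i ∈ p.parts, (i : ZMod (d + 3)) = (a : ZMod (d + 3)) ∨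
      (i : ZMod (d + 3)) = -(a : ZMod (d + 3))) ∧ (d + 3 - a) ∉ p.parts}

/-! ### Glaisher-style merging map -/

/-- Encode: part `i` with multiplicity `k` becomes the distinct parts `i * 2^j`
for `j` ranging over the binary digits of `k`. -/
def encM (s : Multiset ℕ) : Multiset ℕ :=
  ∑ i ∈ s.toFinset, (((s.count i).bitIndices.map (fun j => i * 2 ^ j) : List ℕ) : Multiset ℕ)

/-- Decode a single part. -/
def dec1 (q : ℕ) : Multiset ℕ :=
  Multiset.replicate (2 ^ (q.factorization 2 - 1)) (2 * (q / 2 ^ q.factorization 2))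

/-- Decode a multiset of parts. -/
def decM (t : Multiset ℕ) : Multiset ℕ := t.bind dec1

lemma dec1_spec {m : ℕ} (hm : Odd m) (j : ℕ) :
    dec1 (2 * m * 2 ^ j) = Multiset.replicate (2 ^ j) (2 * m) := by
  have hm0 : m ≠ 0 := by rintro rfl; simp [Nat.odd_iff] at hm
  have hq : 2 * m * 2 ^ j = 2 ^ (j + 1) * m := by ring
  have hfac : (2 * m * 2 ^ j).factorization 2 = j + 1 := by
    rw [hq, Nat.factorization_mul (pow_ne_zero _ two_ne_zero) hm0,
      Nat.Prime.factorization_pow Nat.prime_two]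
    have h2 : m.factorization 2 = 0 :=
      Nat.factorization_eq_zero_of_not_dvd (by
        rw [Nat.odd_iff] at hm; omega)
    simp [h2]
  have hdiv : 2 * m * 2 ^ j / 2 ^ (j + 1) = m := by
    rw [hq, Nat.mul_div_cancel_left _ (pow_pos two_pos _)]
  rw [dec1, hfac, Nat.add_sub_cancel, hdiv]

lemma decM_sum {α : Type*} (t : Finset α) (f : α → Multiset ℕ) :
    decM (∑ i ∈ t, f i) = ∑ i ∈ t, decM (f i) := by
  classical
  induction t using Finset.cons_induction with
  | empty => simp [decM]
  | cons a t ha ih =>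
      rw [Finset.sum_cons, Finset.sum_cons, ← ih]
      simp [decM, Multiset.add_bind]

lemma decM_list {m : ℕ} (hm : Odd m) (l : List ℕ) :
    decM ((l.map (fun j => 2 * m * 2 ^ j) : List ℕ) : Multiset ℕ) =
      Multiset.replicate ((l.map (2 ^ ·)).sum) (2 * m) := by
  induction l with
  | nil => simp [decM]
  | cons j l ih =>
      simp only [List.map_cons, ← Multiset.cons_coe, Multiset.cons_bind, decM] at *
      rw [ih, dec1_spec hm j, List.sum_cons, Multiset.replicate_add]

lemma decM_encM {s : Multiset ℕ} (hs : ∀ i ∈ s, ∃ m, Odd m ∧ i = 2 * m) :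
    decM (encM s) = s := by
  classical
  rw [encM, decM_sum]
  have h : ∀ i ∈ s.toFinset,
      decM (((s.count i).bitIndices.map (fun j => i * 2 ^ j) : List ℕ) : Multiset ℕ)
        = s.count i • ({i} : Multiset ℕ) := by
    intro i hi
    obtain ⟨m, hm, rfl⟩ := hs i (Multiset.mem_toFinset.mp hi)
    rw [decM_list hm, Nat.twoPowSum_bitIndices, Multiset.nsmul_singleton]
  rw [Finset.sum_congr rfl h, Multiset.toFinset_sum_count_nsmul_eq]

lemma msum_sum {α : Type*} (t : Finset α) (f : α → Multiset ℕ) :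
    (∑ i ∈ t, f i).sum = ∑ i ∈ t, (f i).sum := by
  classical
  induction t using Finset.cons_induction with
  | empty => simp
  | cons a t ha ih =>
      rw [Finset.sum_cons, Finset.sum_cons, ← ih, Multiset.sum_add]

lemma encM_sum (s : Multiset ℕ) : (encM s).sum = s.sum := by
  classical
  rw [encM, msum_sum]
  have h : ∀ i ∈ s.toFinset,
      ((((s.count i).bitIndices.map (fun j => i * 2 ^ j) : List ℕ) : Multiset ℕ)).sum
        = i * s.count i := by
    intro i hi
    rw [Multiset.sum_coe]
    simp [List.sum_map_mul_left, Nat.twoPowSum_bitIndices]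
  rw [Finset.sum_congr rfl h]
  conv_rhs => rw [← Multiset.toFinset_sum_count_nsmul_eq s]
  rw [msum_sum]
  refine Finset.sum_congr rfl fun i hi => ?_
  simp [Multiset.nsmul_singleton, mul_comm]

lemma mem_encM {s : Multiset ℕ} {q : ℕ} :
    q ∈ encM s ↔ ∃ i ∈ s.toFinset, ∃ j ∈ (s.count i).bitIndices, q = i * 2 ^ j := by
  classical
  rw [encM, Multiset.mem_sum]
  constructor
  · rintro ⟨i, hi, hq⟩
    rw [Multiset.mem_coe, List.mem_map] at hq
    obtain ⟨j, hj, rfl⟩ := hq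
    exact ⟨i, hi, j, hj, rfl⟩
  · rintro ⟨i, hi, j, hj, rfl⟩
    exact ⟨i, hi, Multiset.mem_coe.mpr (List.mem_map.mpr ⟨j, hj, rfl⟩)⟩

/-- Uniqueness of the odd-part decomposition. -/
lemma odd_part_unique {m m' j j' : ℕ} (hm : Odd m) (hm' : Odd m')
    (h : 2 * m * 2 ^ j = 2 * m' * 2 ^ j') : m = m' ∧ j = j' := by
  have h1 := dec1_spec hm j
  have h2 := dec1_spec hm' j'
  rw [h, h2] at h1
  have hmem : 2 * m' ∈ Multiset.replicate (2 ^ j') (2 * m') :=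
    Multiset.mem_replicate.mpr ⟨pow_ne_zero _ two_ne_zero, rfl⟩
  rw [h1] at hmem
  have hmm : m = m' := by
    have := Multiset.eq_of_mem_replicate hmem
    omega
  subst hmm
  have hm0 : 0 < 2 * m := by
    rcases hm with ⟨k, rfl⟩; omega
  have : (2 : ℕ) ^ j = 2 ^ j' := Nat.eq_of_mul_eq_mul_left hm0 h
  exact ⟨rfl, Nat.pow_right_injective (le_refl 2) this⟩

lemma count_encM_eq_one {s : Multiset ℕ} (hs : ∀ i ∈ s, ∃ m, Odd m ∧ i = 2 * m)
    {q : ℕ} (hq : q ∈ encM s) : (encM s).count q = 1 := by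
  classical
  obtain ⟨i0, hi0, j0, hj0, rfl⟩ := mem_encM.mp hq
  obtain ⟨m0, hm0, rfl⟩ := hs i0 (Multiset.mem_toFinset.mp hi0)
  rw [encM, Multiset.count_sum']
  rw [Finset.sum_eq_single_of_mem (2 * m0) hi0]
  · -- count in the i0-block is 1
    have hnd : ((s.count (2 * m0)).bitIndices.map (fun j => 2 * m0 * 2 ^ j)).Nodup := by
      refine List.Nodup.map ?_ (Nat.bitIndices_sorted.nodup)
      intro a b hab
      have hpos : 0 < 2 * m0 := by rcases hm0 with ⟨k, rfl⟩; omega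
      have : (2:ℕ) ^ a = 2 ^ b := Nat.eq_of_mul_eq_mul_left hpos hab
      exact Nat.pow_right_injective (le_refl 2) this
    have hmem : (2 * m0 * 2 ^ j0) ∈
        (((s.count (2 * m0)).bitIndices.map (fun j => 2 * m0 * 2 ^ j) : List ℕ) : Multiset ℕ) :=
      Multiset.mem_coe.mpr (List.mem_map.mpr ⟨j0, hj0, rfl⟩)
    have h1 : (((s.count (2 * m0)).bitIndices.map (fun j => 2 * m0 * 2 ^ j) : List ℕ) :
        Multiset ℕ).count (2 * m0 * 2 ^ j0) ≤ 1 :=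
      (Multiset.nodup_iff_count_le_one.mp (Multiset.coe_nodup.mpr hnd)) _
    have h2 : 1 ≤ (((s.count (2 * m0)).bitIndices.map (fun j => 2 * m0 * 2 ^ j) : List ℕ) :
        Multiset ℕ).count (2 * m0 * 2 ^ j0) := Multiset.one_le_count_iff_mem.mpr hmem
    omega
  · intro i hi hne
    rw [Multiset.count_eq_zero]
    intro hmem
    rw [Multiset.mem_coe, List.mem_map] at hmem
    obtain ⟨j, hj, hje⟩ := hmem
    obtain ⟨m, hm, rfl⟩ := hs i (Multiset.mem_toFinset.mp hi)
    obtain ⟨h1, -⟩ := odd_part_unique hm hm0 hje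
    exact hne (by rw [h1])

/-- For every n ≥ 1, q_1^{(2)}(n) ≥ Q_1^{(2,−)}(n). -/
theorem kang_park_d_one (n : ℕ) (hn : 1 ≤ n) :
    QPartMinus 1 2 n ≤ qPart 1 2 n := by
  classical
  rw [QPartMinus, qPart]
  -- key structural fact about source partitions
  have key : ∀ (p : Nat.Partition n),
      ((∀ i ∈ p.parts, (i : ZMod (1 + 3)) = ((2 : ℕ) : ZMod (1 + 3)) ∨
        (i : ZMod (1 + 3)) = -((2 : ℕ) : ZMod (1 + 3))) ∧ (1 + 3 - 2) ∉ p.parts) →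
      ∀ i ∈ p.parts, ∃ m, Odd m ∧ 3 ≤ m ∧ i = 2 * m := by
    intro p ⟨h1, h2⟩ i hi
    have hmod : i % 4 = 2 := by
      rcases h1 i hi with h | h
      · have : ((i : ZMod 4) = ((2:ℕ) : ZMod 4)) := h
        rw [ZMod.natCast_eq_natCast_iff'] at this
        simpa using this
      · have heq : -(((2:ℕ)) : ZMod (1+3)) = ((2:ℕ) : ZMod (1+3)) := by decide
        rw [heq] at h
        have : ((i : ZMod 4) = ((2:ℕ) : ZMod 4)) := h
        rw [ZMod.natCast_eq_natCast_iff'] at this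
        simpa using this
    have hne2 : i ≠ 2 := by
      intro h; exact h2 (by simpa [h] using hi)
    refine ⟨i / 2, ?_, ?_, ?_⟩ <;> [skip; omega; omega]
    rw [Nat.odd_iff]; omega
  -- the injection
  set T := {p : Nat.Partition n //
    (∀ i ∈ p.parts, 2 ≤ i) ∧
    ∀ i ∈ p.parts, p.parts.count i = 1 ∧
      ∀ j ∈ p.parts, j ≠ i → ((1:ℕ) : ℤ) ≤ |(i : ℤ) - (j : ℤ)|} with hT
  let F : {p : Nat.Partition n //
      (∀ i ∈ p.parts, (i : ZMod (1 + 3)) = ((2 : ℕ) : ZMod (1 + 3)) ∨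
        (i : ZMod (1 + 3)) = -((2 : ℕ) : ZMod (1 + 3))) ∧ (1 + 3 - 2) ∉ p.parts} → T := by
    intro ⟨p, hp⟩
    have hodd : ∀ i ∈ p.parts, ∃ m, Odd m ∧ i = 2 * m := by
      intro i hi
      obtain ⟨m, hm, -, he⟩ := key p hp i hi
      exact ⟨m, hm, he⟩
    refine ⟨⟨encM p.parts, ?_, ?_⟩, ?_, ?_⟩
    · -- positivity
      intro q hq
      obtain ⟨i, hi, j, hj, rfl⟩ := mem_encM.mp hq
      have := p.parts_pos (Multiset.mem_toFinset.mp hi)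
      positivity
    · rw [encM_sum, p.parts_sum]
    · -- parts ≥ 2
      intro q hq
      obtain ⟨i, hi, j, hj, rfl⟩ := mem_encM.mp hq
      obtain ⟨m, hm, h3, he⟩ := key p hp i (Multiset.mem_toFinset.mp hi)
      have h2j : 1 ≤ 2 ^ j := Nat.one_le_two_pow
      calc 2 ≤ i := by omega
        _ = i * 1 := (mul_one i).symm
        _ ≤ i * 2 ^ j := Nat.mul_le_mul_left i h2j
    · -- distinctness
      intro q hq
      refine ⟨count_encM_eq_one hodd hq, ?_⟩
      intro r hr hne
      refine Int.one_le_abs ?_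
      intro h
      apply hne
      have : (r : ℤ) = (q : ℤ) := by omega
      exact_mod_cast this
  refine Fintype.card_le_of_injective F ?_
  rintro ⟨p1, hp1⟩ ⟨p2, hp2⟩ hF
  have hparts : encM p1.parts = encM p2.parts := by
    have := congrArg (fun x : T => (x.1).parts) hF
    simpa [F] using this
  have hodd1 : ∀ i ∈ p1.parts, ∃ m, Odd m ∧ i = 2 * m := by
    intro i hi; obtain ⟨m, hm, -, he⟩ := key p1 hp1 i hi; exact ⟨m, hm, he⟩
  have hodd2 : ∀ i ∈ p2.parts, ∃ m, Odd m ∧ i = 2 * m := by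
    intro i hi; obtain ⟨m, hm, -, he⟩ := key p2 hp2 i hi; exact ⟨m, hm, he⟩
  have : p1.parts = p2.parts := by
    rw [← decM_encM hodd1, ← decM_encM hodd2, hparts]
  exact Subtype.ext (Nat.Partition.ext this)
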